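/- Second-order equations (11) for the half-angle variables: let (χ, a, f, Q) be a solution of system (10) on (0,∞) with ε = 1, a twice differentiable, and Q(ρ) > 0 for all ρ > 0, and define U(ρ) = √(Q(ρ)) cos(χ(ρ)/2) and V(ρ) = √(Q(ρ)) sin(χ(ρ)/2). Then on any interval where a + 2 ≠ 0 the function U satisfies d²U/dρ² + (f/(ρ²(a + 2))) dU/dρ + (1/4)a(a + 2)U = 0, and on any interval where a ≠ 0 the function V satisfies d²V/dρ² + (f/(ρ² a)) dV/dρ + (1/4)a(a + 2)V = 0. -/

import Mathlib

open Real Filter Topology Set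

/-- Second-order equations (11) for the half-angle variables: for a
solution `(χ, a, f, Q)` of system (10) on `(0,∞)` with `ε = 1`, `a` twice
differentiable and `Q > 0` on `(0,∞)`, the functions `U = √Q cos(χ/2)` and
`V = √Q sin(χ/2)` satisfy, wherever `a + 2 ≠ 0` resp. `a ≠ 0`,
`U'' + (f/(ρ²(a+2))) U' + (1/4)a(a+2)U = 0` and
`V'' + (f/(ρ² a)) V' + (1/4)a(a+2)V = 0`. -/
theorem half_angle_second_order_equations
    (χ a f Q : ℝ → ℝ)
    (hχ : ∀ ρ > (0:ℝ), HasDerivAt χ (a ρ + 1 - Real.cos (χ ρ)) ρ)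
    (ha : ∀ ρ > (0:ℝ), HasDerivAt a (-(1:ℝ) * f ρ / ρ ^ 2) ρ)
    (hf : ∀ ρ > (0:ℝ), HasDerivAt f (Q ρ) ρ)
    (hQ : ∀ ρ > (0:ℝ), HasDerivAt Q (-Q ρ * Real.sin (χ ρ)) ρ)
    (hQpos : ∀ ρ > (0:ℝ), 0 < Q ρ)
    (ha2 : ∀ ρ > (0:ℝ), DifferentiableAt ℝ (deriv a) ρ) :
    ∀ ρ > (0:ℝ),
      (a ρ + 2 ≠ 0 →
        deriv (deriv (fun σ => Real.sqrt (Q σ) * Real.cos (χ σ / 2))) ρ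
          + f ρ / (ρ ^ 2 * (a ρ + 2)) *
            deriv (fun σ => Real.sqrt (Q σ) * Real.cos (χ σ / 2)) ρ
          + (1 / 4) * a ρ * (a ρ + 2) * (Real.sqrt (Q ρ) * Real.cos (χ ρ / 2)) = 0) ∧
      (a ρ ≠ 0 →
        deriv (deriv (fun σ => Real.sqrt (Q σ) * Real.sin (χ σ / 2))) ρ
          + f ρ / (ρ ^ 2 * a ρ) *
            deriv (fun σ => Real.sqrt (Q σ) * Real.sin (χ σ / 2)) ρ
          + (1 / 4) * a ρ * (a ρ + 2) * (Real.sqrt (Q ρ) * Real.sin (χ ρ / 2)) = 0) := by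
  set U : ℝ → ℝ := fun σ => Real.sqrt (Q σ) * Real.cos (χ σ / 2) with hUdef
  set V : ℝ → ℝ := fun σ => Real.sqrt (Q σ) * Real.sin (χ σ / 2) with hVdef
  have hQne : ∀ ρ > (0:ℝ), Real.sqrt (Q ρ) ≠ 0 := fun ρ hρ =>
    (Real.sqrt_pos.mpr (hQpos ρ hρ)).ne'
  have hsq : ∀ ρ > (0:ℝ), HasDerivAt (fun σ => Real.sqrt (Q σ))
      (-Q ρ * Real.sin (χ ρ) / (2 * Real.sqrt (Q ρ))) ρ :=
    fun ρ hρ => (hQ ρ hρ).sqrt (hQpos ρ hρ).ne'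
  -- first-order relations
  have hU' : ∀ ρ > (0:ℝ), HasDerivAt U (-(a ρ + 2) / 2 * V ρ) ρ := by
    intro ρ hρ
    have h := (hsq ρ hρ).fun_mul ((hχ ρ hρ).div_const 2).cos
    refine h.congr_deriv ?_
    have ht : Real.sqrt (Q ρ) ^ 2 = Q ρ := Real.sq_sqrt (hQpos ρ hρ).le
    have hsin : Real.sin (χ ρ) = 2 * Real.sin (χ ρ / 2) * Real.cos (χ ρ / 2) := by
      have h0 := Real.sin_two_mul (χ ρ / 2)
      rwa [show 2 * (χ ρ / 2) = χ ρ by ring] at h0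
    have hcos : Real.cos (χ ρ) = 2 * Real.cos (χ ρ / 2) ^ 2 - 1 := by
      have h0 := Real.cos_two_mul (χ ρ / 2)
      rwa [show 2 * (χ ρ / 2) = χ ρ by ring] at h0
    simp only [hVdef]
    rw [hsin, hcos, ← ht]
    field_simp [hQne ρ hρ]
    rw [Real.sqrt_sq (Real.sqrt_nonneg _)]
    ring
  have hV' : ∀ ρ > (0:ℝ), HasDerivAt V (a ρ / 2 * U ρ) ρ := by
    intro ρ hρ
    have h := (hsq ρ hρ).fun_mul ((hχ ρ hρ).div_const 2).sin
    refine h.congr_deriv ?_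
    have ht : Real.sqrt (Q ρ) ^ 2 = Q ρ := Real.sq_sqrt (hQpos ρ hρ).le
    have hsin : Real.sin (χ ρ) = 2 * Real.sin (χ ρ / 2) * Real.cos (χ ρ / 2) := by
      have h0 := Real.sin_two_mul (χ ρ / 2)
      rwa [show 2 * (χ ρ / 2) = χ ρ by ring] at h0
    have hpy : Real.sin (χ ρ / 2) ^ 2 + Real.cos (χ ρ / 2) ^ 2 = 1 :=
      Real.sin_sq_add_cos_sq _
    have hcos : Real.cos (χ ρ) = 1 - 2 * Real.sin (χ ρ / 2) ^ 2 := by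
      have h0 := Real.cos_two_mul (χ ρ / 2)
      rw [show 2 * (χ ρ / 2) = χ ρ by ring] at h0
      rw [h0]; nlinarith [hpy]
    simp only [hUdef]
    rw [hsin, hcos, ← ht]
    field_simp [hQne ρ hρ]
    rw [Real.sqrt_sq (Real.sqrt_nonneg _)]
    ring
  intro ρ hρ
  have hρ2 : (ρ:ℝ) ^ 2 ≠ 0 := pow_ne_zero 2 hρ.ne'
  -- deriv values
  have hUd : deriv U ρ = -(a ρ + 2) / 2 * V ρ := (hU' ρ hρ).deriv
  have hVd : deriv V ρ = a ρ / 2 * U ρ := (hV' ρ hρ).deriv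
  -- second derivatives
  have hevU : deriv U =ᶠ[𝓝 ρ] fun σ => -(a σ + 2) / 2 * V σ := by
    filter_upwards [Ioi_mem_nhds hρ] with σ hσ using (hU' σ hσ).deriv
  have hevV : deriv V =ᶠ[𝓝 ρ] fun σ => a σ / 2 * U σ := by
    filter_upwards [Ioi_mem_nhds hρ] with σ hσ using (hV' σ hσ).deriv
  have hWU : HasDerivAt (fun σ => -(a σ + 2) / 2 * V σ)
      ((-(-(1:ℝ) * f ρ / ρ ^ 2) / 2) * V ρ + (-(a ρ + 2) / 2) * (a ρ / 2 * U ρ)) ρ := by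
    exact (((ha ρ hρ).add_const 2).neg.div_const 2).mul (hV' ρ hρ)
  have hWV : HasDerivAt (fun σ => a σ / 2 * U σ)
      ((-(1:ℝ) * f ρ / ρ ^ 2 / 2) * U ρ + (a ρ / 2) * (-(a ρ + 2) / 2 * V ρ)) ρ := by
    exact ((ha ρ hρ).div_const 2).mul (hU' ρ hρ)
  have hU2 : deriv (deriv U) ρ =
      (-(-(1:ℝ) * f ρ / ρ ^ 2) / 2) * V ρ + (-(a ρ + 2) / 2) * (a ρ / 2 * U ρ) := by
    rw [hevU.deriv_eq]; exact hWU.deriv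
  have hV2 : deriv (deriv V) ρ =
      (-(1:ℝ) * f ρ / ρ ^ 2 / 2) * U ρ + (a ρ / 2) * (-(a ρ + 2) / 2 * V ρ) := by
    rw [hevV.deriv_eq]; exact hWV.deriv
  constructor
  · intro h2
    rw [hU2, hUd]
    field_simp
    ring
  · intro h2
    rw [hV2, hVd]
    field_simp
    ring
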